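/- The category Weil has finite coproducts, given by the tensor product of augmented ℕ-algebras: for Weil-algebras A = ℕ[x₁,…,xₙ]/(xᵢxⱼ : i ∼ j) and A' = ℕ[x₁,…,x_{n'}]/(xᵢxⱼ : i ∼' j), the Weil-algebra A ⊗ A' := ℕ[x₁,…,x_{n+n'}]/(xᵢxⱼ : i ∼'' j) — where i ∼'' j iff (i,j ≤ n and i ∼ j) or (i,j ≥ n+1 and (i−n) ∼' (j−n)) — together with the two evident inclusions of generators, satisfies the universal property of the coproduct of A and A' in Weil. -/

import Mathlib

open MvPolynomial

section Helpers

variable {R S : Type*} [NonAssocSemiring R] [NonAssocSemiring S]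

/-- The kernel congruence of a ring hom. -/
def RingHom.ringConKer (f : R →+* S) : RingCon R where
  r a b := f a = f b
  iseqv := ⟨fun _ => rfl, Eq.symm, Eq.trans⟩
  add' h h' := by simp only [map_add]; exact congrArg₂ (·+·) h h'
  mul' h h' := by simp only [map_mul]; exact congrArg₂ (·*·) h h'

/-- Lift a ring hom through a ring congruence quotient. -/
def RingCon.liftHom (c : RingCon R) (f : R →+* S) (h : ∀ a b, c a b → f a = f b) :
    c.Quotient →+* S where
  toFun := Quotient.lift f fun a b hab => h a b hab
  map_one' := map_one f
  map_zero' := map_zero f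
  map_mul' := fun x y => Quotient.inductionOn₂ x y fun a b => map_mul f a b
  map_add' := fun x y => Quotient.inductionOn₂ x y fun a b => map_add f a b

theorem RingCon.liftHom_mk' (c : RingCon R) (f : R →+* S) (h) (x : R) :
    c.liftHom f h (c.mk' x) = f x := rfl

theorem RingCon.hom_ext {c : RingCon R} {k₁ k₂ : c.Quotient →+* S}
    (h : k₁.comp c.mk' = k₂.comp c.mk') : k₁ = k₂ :=
  RingHom.ext fun x => Quotient.inductionOn x fun a => RingHom.congr_fun h a

end Helpers

/-- A presentation of a Weil-algebra: a finite set of generators together with a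
reflexive symmetric relation `sim`; the algebra is `ℕ[xᵢ]/(xᵢxⱼ : sim i j)`. -/
structure WeilPres where
  ι : Type
  fintypeI : Fintype ι
  sim : ι → ι → Prop
  refl : ∀ i, sim i i
  symm : ∀ i j, sim i j → sim j i

attribute [instance] WeilPres.fintypeI

/-- The underlying commutative semiring `ℕ[x₁,…,xₙ]/(xᵢxⱼ : i ∼ j)` of a Weil presentation. -/
def WeilPres.Carrier (P : WeilPres) : Type :=
  (ringConGen fun p q : MvPolynomial P.ι ℕ =>
    ∃ i j, P.sim i j ∧ p = X i * X j ∧ q = 0).Quotient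

noncomputable instance (P : WeilPres) : CommSemiring P.Carrier :=
  inferInstanceAs (CommSemiring (RingCon.Quotient _))

/-- The generator `xᵢ` of the Weil-algebra presented by `P`. -/
noncomputable def WeilPres.gen (P : WeilPres) (i : P.ι) : P.Carrier :=
  RingCon.mk' _ (X i)

/-- Tensor product (coproduct) of Weil presentations: concatenation of generators. -/
def WeilPres.tensor (P Q : WeilPres) : WeilPres where
  ι := P.ι ⊕ Q.ι
  fintypeI := inferInstance
  sim := Sum.LiftRel P.sim Q.sim
  refl i := by cases i with
    | inl a => exact Sum.LiftRel.inl (P.refl a)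
    | inr a => exact Sum.LiftRel.inr (Q.refl a)
  symm i j h := by cases h with
    | inl h => exact Sum.LiftRel.inl (P.symm _ _ h)
    | inr h => exact Sum.LiftRel.inr (Q.symm _ _ h)

/-- `Wⁿ = ℕ[x₁,…,xₙ]/(xᵢxⱼ)`: all pairwise products of generators vanish. -/
def WnPres (n : ℕ) : WeilPres where
  ι := Fin n
  fintypeI := inferInstance
  sim _ _ := True
  refl _ := trivial
  symm _ _ _ := trivial

/-- `ℕ` itself, as the Weil-algebra with no generators. -/
def NPres : WeilPres where
  ι := Empty
  fintypeI := inferInstance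
  sim _ _ := True
  refl _ := trivial
  symm _ _ _ := trivial

/-- The tensor product `A ⊗ A'` (concatenation of generators), with the two evident
inclusions of generators, is the coproduct of `A` and `A'` in the category `Weil`. -/
theorem weil_tensor_is_coproduct (P P' : WeilPres) :
    ∃ (ι₁ : P.Carrier →+* (P.tensor P').Carrier) (ι₂ : P'.Carrier →+* (P.tensor P').Carrier),
      (∀ a : P.ι, ι₁ (P.gen a) = (P.tensor P').gen (Sum.inl a)) ∧
      (∀ b : P'.ι, ι₂ (P'.gen b) = (P.tensor P').gen (Sum.inr b)) ∧
      ∀ (Q : WeilPres) (f : P.Carrier →+* Q.Carrier) (g : P'.Carrier →+* Q.Carrier),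
        ∃! h : (P.tensor P').Carrier →+* Q.Carrier, h.comp ι₁ = f ∧ h.comp ι₂ = g := by
  classical
  let F₁ : MvPolynomial P.ι ℕ →+* (P.tensor P').Carrier :=
    (RingCon.mk' _).comp (rename Sum.inl : MvPolynomial P.ι ℕ →ₐ[ℕ] _).toRingHom
  let F₂ : MvPolynomial P'.ι ℕ →+* (P.tensor P').Carrier :=
    (RingCon.mk' _).comp (rename Sum.inr : MvPolynomial P'.ι ℕ →ₐ[ℕ] _).toRingHom
  have key : ∀ (i j : (P.tensor P').ι), (P.tensor P').sim i j →
      (RingCon.mk' (ringConGen fun p q : MvPolynomial (P.tensor P').ι ℕ =>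
        ∃ i j, (P.tensor P').sim i j ∧ p = X i * X j ∧ q = 0)) (X i * X j) = 0 :=
    fun i j hij => (RingCon.eq _).mpr (RingConGen.Rel.of _ _ ⟨i, j, hij, rfl, rfl⟩)
  have hF₁X : ∀ i : P.ι, F₁ (X i) = (RingCon.mk' _) (X (Sum.inl i)) := by
    intro i
    show (RingCon.mk' _) ((rename (R := ℕ) Sum.inl) (X i)) = _
    rw [rename_X]
  have hF₂X : ∀ j : P'.ι, F₂ (X j) = (RingCon.mk' _) (X (Sum.inr j)) := by
    intro j
    show (RingCon.mk' _) ((rename (R := ℕ) Sum.inr) (X j)) = _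
    rw [rename_X]
  have h₁ : ∀ a b, (ringConGen fun p q : MvPolynomial P.ι ℕ =>
      ∃ i j, P.sim i j ∧ p = X i * X j ∧ q = 0) a b → F₁ a = F₁ b := by
    intro a b hab
    refine (RingCon.ringConGen_le (c := F₁.ringConKer)).mpr ?_ hab
    rintro p q ⟨i, j, hij, rfl, rfl⟩
    have e : (rename (R := ℕ) (Sum.inl : P.ι → (P.tensor P').ι)) (X i * X j) = X (Sum.inl i) * X (Sum.inl j) := by
      rw [map_mul, rename_X, rename_X]
    calc F₁ (X i * X j) = (show (P.tensor P').Carrier from (RingCon.mk' _) (X (Sum.inl i) * X (Sum.inl j))) :=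
          congrArg _ e
      _ = (0 : (P.tensor P').Carrier) := key _ _ (Sum.LiftRel.inl hij)
      _ = F₁ 0 := (map_zero F₁).symm
  have h₂ : ∀ a b, (ringConGen fun p q : MvPolynomial P'.ι ℕ =>
      ∃ i j, P'.sim i j ∧ p = X i * X j ∧ q = 0) a b → F₂ a = F₂ b := by
    intro a b hab
    refine (RingCon.ringConGen_le (c := F₂.ringConKer)).mpr ?_ hab
    rintro p q ⟨i, j, hij, rfl, rfl⟩
    have e : (rename (R := ℕ) (Sum.inr : P'.ι → (P.tensor P').ι)) (X i * X j) = X (Sum.inr i) * X (Sum.inr j) := by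
      rw [map_mul, rename_X, rename_X]
    calc F₂ (X i * X j) = (show (P.tensor P').Carrier from (RingCon.mk' _) (X (Sum.inr i) * X (Sum.inr j))) :=
          congrArg _ e
      _ = (0 : (P.tensor P').Carrier) := key _ _ (Sum.LiftRel.inr hij)
      _ = F₂ 0 := (map_zero F₂).symm
  refine ⟨RingCon.liftHom _ F₁ h₁, RingCon.liftHom _ F₂ h₂, ?_, ?_, ?_⟩
  · intro a; exact hF₁X a
  · intro b; exact hF₂X b
  · intro Q f g
    let G : MvPolynomial (P.tensor P').ι ℕ →+* Q.Carrier :=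
      eval₂Hom (Nat.castRingHom Q.Carrier)
        (Sum.elim (fun i => f (P.gen i)) (fun j => g (P'.gen j)))
    have hGX : ∀ i, G (X i) = Sum.elim (fun i => f (P.gen i)) (fun j => g (P'.gen j)) i := by
      intro i; exact eval₂_X _ _ _
    have genmul : ∀ (W : WeilPres) (i j : W.ι), W.sim i j → W.gen i * W.gen j = 0 := by
      intro W i j hij
      calc W.gen i * W.gen j = (show W.Carrier from (RingCon.mk' _) (X i * X j)) := (map_mul _ _ _).symm
        _ = (0 : W.Carrier) := (RingCon.eq _).mpr (RingConGen.Rel.of _ _ ⟨i, j, hij, rfl, rfl⟩)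
    have hG : ∀ a b, (ringConGen fun p q : MvPolynomial (P.tensor P').ι ℕ =>
        ∃ i j, (P.tensor P').sim i j ∧ p = X i * X j ∧ q = 0) a b → G a = G b := by
      intro a b hab
      refine (RingCon.ringConGen_le (c := G.ringConKer)).mpr ?_ hab
      rintro p q ⟨i, j, hij, rfl, rfl⟩
      show G (X i * X j) = G 0
      rw [map_mul, map_zero, hGX, hGX]
      cases hij with
      | inl h =>
        calc f (P.gen _) * f (P.gen _) = f (P.gen _ * P.gen _) := (map_mul f _ _).symm
          _ = 0 := by rw [genmul _ _ _ h, map_zero]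
      | inr h =>
        calc g (P'.gen _) * g (P'.gen _) = g (P'.gen _ * P'.gen _) := (map_mul g _ _).symm
          _ = 0 := by rw [genmul _ _ _ h, map_zero]
    have hCnat : ∀ (σ : Type) (n : ℕ), (C n : MvPolynomial σ ℕ) = (n : MvPolynomial σ ℕ) := by
      intro σ n
      rw [show ((n : ℕ) : MvPolynomial σ ℕ) = C ((n : ℕ) : ℕ) from (C_eq_coe_nat n).symm]
    refine ⟨RingCon.liftHom _ G hG, ⟨?_, ?_⟩, ?_⟩
    · refine RingCon.hom_ext (ringHom_ext (fun n => ?_) (fun i => ?_))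
      · simp only [RingHom.comp_apply, hCnat, map_natCast]
      · show RingCon.liftHom _ G hG (F₁ (X i)) = f ((RingCon.mk' _) (X i))
        rw [hF₁X]
        exact (hGX (Sum.inl i))
    · refine RingCon.hom_ext (ringHom_ext (fun n => ?_) (fun j => ?_))
      · simp only [RingHom.comp_apply, hCnat, map_natCast]
      · show RingCon.liftHom _ G hG (F₂ (X j)) = g ((RingCon.mk' _) (X j))
        rw [hF₂X]
        exact (hGX (Sum.inr j))
    · rintro h' ⟨hf, hg⟩
      refine RingCon.hom_ext (ringHom_ext (fun n => ?_) (fun i => ?_))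
      · simp only [RingHom.comp_apply, hCnat, map_natCast]
      · simp only [RingHom.comp_apply]
        show h' ((RingCon.mk' _) (X i)) = RingCon.liftHom _ G hG ((RingCon.mk' _) (X i))
        rw [RingCon.liftHom_mk']
        cases i with
        | inl i =>
          calc h' ((RingCon.mk' _) (X (Sum.inl i)))
              = h' (RingCon.liftHom _ F₁ h₁ (P.gen i)) := congrArg h' (hF₁X i).symm
            _ = f (P.gen i) := RingHom.congr_fun hf (P.gen i)
            _ = G (X (Sum.inl i)) := (hGX (Sum.inl i)).symm
        | inr j =>
          calc h' ((RingCon.mk' _) (X (Sum.inr j)))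
              = h' (RingCon.liftHom _ F₂ h₂ (P'.gen j)) := congrArg h' (hF₂X j).symm
            _ = g (P'.gen j) := RingHom.congr_fun hg (P'.gen j)
            _ = G (X (Sum.inr j)) := (hGX (Sum.inr j)).symm
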